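/- arXiv:1605.08820 — 2 statements merged into one kernel-verified Lean document; each statement's English description precedes it below -/
import Mathlib

section
/- Let G be a commutative group (written multiplicatively) and let M be a divisible abelian group (written additively), regarded as a trivial G-module. Every symmetric 2-cocycle f : G × G → M is a 2-coboundary: there exists g : G → M with f(x,y) = g(x) + g(y) − g(x*y) for all x,y ∈ G. (This is the proof content of the paper's Lemma 2.2, whose argument uses only that the coefficient group ℚ̄ℓˣ is divisible, via the vanishing of Ext¹ently of divisible groups.) -/
section Aux

variable {G M : Type*} [CommGroup G] [AddCommGroup M]

/-- The extension group structure on `M × G` defined by a normalized symmetric 2-cocycle. -/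
def extACG (f : G → G → M)
    (hcoc : ∀ x y z : G, f y z - f (x * y) z + f x (y * z) - f x y = 0)
    (hsym : ∀ x y : G, f x y = f y x)
    (h1 : ∀ x : G, f 1 x = 0) (h1' : ∀ x : G, f x 1 = 0) :
    AddCommGroup (M × G) :=
  letI : Zero (M × G) := ⟨(0, 1)⟩
  letI : Add (M × G) := ⟨fun a b => (a.1 + b.1 + f a.2 b.2, a.2 * b.2)⟩
  letI : Neg (M × G) := ⟨fun a => (-a.1 - f a.2 a.2⁻¹, a.2⁻¹)⟩
  { add := (· + ·)
    zero := 0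
    neg := (- ·)
    nsmul := nsmulRec
    zsmul := zsmulRec
    add_assoc := fun a b c => by
      have h := hcoc a.2 b.2 c.2
      rw [sub_eq_zero] at h
      refine Prod.ext ?_ (mul_assoc _ _ _)
      show a.1 + b.1 + f a.2 b.2 + c.1 + f (a.2 * b.2) c.2
          = a.1 + (b.1 + c.1 + f b.2 c.2) + f a.2 (b.2 * c.2)
      rw [← h]; abel
    zero_add := fun a => by
      refine Prod.ext ?_ (one_mul _)
      show (0 : M) + a.1 + f 1 a.2 = a.1
      rw [h1]; abel
    add_zero := fun a => by
      refine Prod.ext ?_ (mul_one _)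
      show a.1 + (0 : M) + f a.2 1 = a.1
      rw [h1']; abel
    neg_add_cancel := fun a => by
      refine Prod.ext ?_ (inv_mul_cancel _)
      show -a.1 - f a.2 a.2⁻¹ + a.1 + f a.2⁻¹ a.2 = 0
      rw [hsym a.2⁻¹ a.2]; abel
    add_comm := fun a b => by
      refine Prod.ext ?_ (mul_comm _ _)
      show a.1 + b.1 + f a.2 b.2 = b.1 + a.1 + f b.2 a.2
      rw [hsym a.2 b.2]; abel }

lemma extACG_key (f : G → G → M)
    (hcoc : ∀ x y z : G, f y z - f (x * y) z + f x (y * z) - f x y = 0)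
    (hsym : ∀ x y : G, f x y = f y x)
    (h1 : ∀ x : G, f 1 x = 0) (h1' : ∀ x : G, f x 1 = 0) (x y : G) :
    letI := extACG f hcoc hsym h1 h1'
    ((0, x) : M × G) + (0, y) - (0, x * y) = (f x y, 1) := by
  letI := extACG f hcoc hsym h1 h1'
  rw [sub_eq_add_neg]
  refine Prod.ext ?_ ?_
  · show (0 : M) + 0 + f x y + (-(0 : M) - f (x * y) (x * y)⁻¹) + f (x * y) (x * y)⁻¹ = f x y
    abel
  · show x * y * (x * y)⁻¹ = 1
    exact mul_inv_cancel _

lemma extACG_incl_add (f : G → G → M)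
    (hcoc : ∀ x y z : G, f y z - f (x * y) z + f x (y * z) - f x y = 0)
    (hsym : ∀ x y : G, f x y = f y x)
    (h1 : ∀ x : G, f 1 x = 0) (h1' : ∀ x : G, f x 1 = 0) (m n : M) :
    letI := extACG f hcoc hsym h1 h1'
    ((m, 1) : M × G) + (n, 1) = (m + n, 1) := by
  letI := extACG f hcoc hsym h1 h1'
  refine Prod.ext ?_ ?_
  · show m + n + f 1 1 = m + n
    rw [h1]; abel
  · show (1 : G) * 1 = 1
    exact mul_one _

end Aux

/-- Every symmetric 2-cocycle on a commutative group `G` with values in a divisible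
abelian group `M` (trivial `G`-action) is a 2-coboundary. -/
theorem symmetric_two_cocycle_is_coboundary_divisible
    (G M : Type*) [CommGroup G] [AddCommGroup M]
    (hdiv : ∀ (m : M) (n : ℕ), 0 < n → ∃ x : M, n • x = m)
    (f : G → G → M)
    (hcoc : ∀ x y z : G,
      f y z - f (x * y) z + f x (y * z) - f x y = 0)
    (hsym : ∀ x y : G, f x y = f y x) :
    ∃ g : G → M, ∀ x y : G, f x y = g x + g y - g (x * y) := by
  classical
  -- divisibility instance
  haveI : DivisibleBy M ℤ :=
    { div := fun m n => if hn : n = 0 then 0 else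
        (Int.sign n) • Classical.choose (hdiv m n.natAbs (Int.natAbs_pos.mpr hn))
      div_zero := fun m => by simp
      div_cancel := fun {n} m hn => by
        have hc := Classical.choose_spec (hdiv m n.natAbs (Int.natAbs_pos.mpr hn))
        rw [dif_neg hn, smul_smul, Int.mul_sign_self, natCast_zsmul, hc] }
  -- normalize the cocycle
  set c : M := f 1 1 with hc
  set f' : G → G → M := fun x y => f x y - c with hf'
  have hcoc' : ∀ x y z : G, f' y z - f' (x * y) z + f' x (y * z) - f' x y = 0 := by
    intro x y z
    have h := hcoc x y z
    simp only [hf']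
    rw [← h]; abel
  have hsym' : ∀ x y : G, f' x y = f' y x := fun x y => by simp only [hf', hsym x y]
  have h1 : ∀ x : G, f' 1 x = 0 := by
    intro x
    have h := hcoc' 1 1 x
    have h0 : f' 1 1 = 0 := by simp [hf', hc]
    simp only [one_mul, h0] at h
    -- h : f' 1 x - f' 1 x + f' 1 x - 0 = 0
    rw [sub_self, zero_add, sub_zero] at h
    exact h
  have h1' : ∀ x : G, f' x 1 = 0 := fun x => by rw [hsym']; exact h1 x
  letI : AddCommGroup (M × G) := extACG f' hcoc' hsym' h1 h1'
  -- the inclusion of M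
  let i : M →+ (M × G) :=
    { toFun := fun m => (m, 1)
      map_zero' := rfl
      map_add' := fun m n => (extACG_incl_add f' hcoc' hsym' h1 h1' m n).symm }
  have hi : Function.Injective i := fun a b h => congrArg Prod.fst h
  obtain ⟨s, hs⟩ := (Module.Baer.of_divisible M).extension_property_addMonoidHom
    i hi (AddMonoidHom.id M)
  have hsi : ∀ m : M, s (m, 1) = m := fun m => DFunLike.congr_fun hs m
  refine ⟨fun x => s (0, x) + c, fun x y => ?_⟩
  have hk := congrArg s (extACG_key f' hcoc' hsym' h1 h1' x y)
  rw [map_sub, map_add, hsi] at hk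
  -- hk : s (0, x) + s (0, y) - s (0, x * y) = f' x y
  have hf : f x y = f' x y + c := by simp [hf']
  rw [hf, ← hk]
  simp only [sub_eq_add_neg, neg_add]
  abel
end

section
/- Let G be a commutative group (written multiplicatively) and M a divisible abelian group (written additively), regarded as a trivial G-module. If f and f′ are 2-cocycles on G with values in M whose antisymmetrizations agree, i.e. f(x,y) − f(y,x) = f′(x,y) − f′(y,x) for all x,y ∈ G, then f and f′ are cohomologous: there exists g : G → M with f(x,y) − f′(x,y) = g(x) + g(y) − g(x*y) for all x,y ∈ G. (This is the injectivity, for divisible coefficients, of the antisymmetrization map H²(G, M) → Hom(∧²G, M) arising from the universal coefficient sequence in the proof of Lemma 2.2.) -/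
open CategoryTheory

private lemma eq_of_sub_eq_aux {M : Type*} [AddCommGroup M] {a b e : M}
    (he : e = 0) (h : a - b = e) : a = b :=
  sub_eq_zero.mp (h.trans he)

section Aux

variable {G M : Type*} [CommGroup G] [AddCommGroup M]

/-- Group structure on `M × G` twisted by a normalized symmetric 2-cocycle `d`. -/
def extAddCommGroup (d : G → G → M)
    (hc : ∀ x y z : G, d y z - d (x * y) z + d x (y * z) - d x y = 0)
    (hs : ∀ x y : G, d x y = d y x)
    (h1 : ∀ y : G, d 1 y = 0) (h1' : ∀ x : G, d x 1 = 0) :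
    AddCommGroup (M × G) :=
  letI addI : Add (M × G) := ⟨fun p q => (p.1 + q.1 + d p.2 q.2, p.2 * q.2)⟩
  letI zeroI : Zero (M × G) := ⟨((0 : M), (1 : G))⟩
  letI negI : Neg (M × G) := ⟨fun p => (-p.1 - d p.2 p.2⁻¹, p.2⁻¹)⟩
  { add := (· + ·), zero := 0, neg := Neg.neg
    nsmul := nsmulRec
    zsmul := zsmulRec
    add_assoc := fun p q r => by
      refine Prod.ext ?_ (mul_assoc _ _ _)
      show p.1 + q.1 + d p.2 q.2 + r.1 + d (p.2 * q.2) r.2 =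
        p.1 + (q.1 + r.1 + d q.2 r.2) + d p.2 (q.2 * r.2)
      exact (eq_of_sub_eq_aux (hc p.2 q.2 r.2) (by abel)).symm
    zero_add := fun p => by
      refine Prod.ext ?_ (one_mul _)
      show (0 : M) + p.1 + d 1 p.2 = p.1
      rw [h1]; abel
    add_zero := fun p => by
      refine Prod.ext ?_ (mul_one _)
      show p.1 + 0 + d p.2 1 = p.1
      rw [h1']; abel
    neg_add_cancel := fun p => by
      refine Prod.ext ?_ (inv_mul_cancel _)
      show -p.1 - d p.2 p.2⁻¹ + p.1 + d p.2⁻¹ p.2 = 0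
      rw [hs p.2⁻¹ p.2]; abel
    add_comm := fun p q => by
      refine Prod.ext ?_ (mul_comm _ _)
      show p.1 + q.1 + d p.2 q.2 = q.1 + p.1 + d q.2 p.2
      rw [hs]; abel }

end Aux

/-- For divisible coefficients, two 2-cocycles on a commutative group with the same
antisymmetrization are cohomologous. -/
theorem cocycles_with_same_antisymmetrization_cohomologous
    (G M : Type*) [CommGroup G] [AddCommGroup M]
    (hdiv : ∀ (m : M) (n : ℕ), 0 < n → ∃ x : M, n • x = m)
    (f f' : G → G → M)
    (hcoc : ∀ x y z : G,
      f y z - f (x * y) z + f x (y * z) - f x y = 0)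
    (hcoc' : ∀ x y z : G,
      f' y z - f' (x * y) z + f' x (y * z) - f' x y = 0)
    (hanti : ∀ x y : G, f x y - f y x = f' x y - f' y x) :
    ∃ g : G → M, ∀ x y : G, f x y - f' x y = g x + g y - g (x * y) := by
  classical
  -- normalization facts
  have hf1 : ∀ z : G, f 1 z = f 1 1 := fun z => by
    have h := hcoc 1 1 z
    rw [one_mul, one_mul] at h
    exact eq_of_sub_eq_aux h (by abel)
  have hf'1 : ∀ z : G, f' 1 z = f' 1 1 := fun z => by
    have h := hcoc' 1 1 z
    rw [one_mul, one_mul] at h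
    exact eq_of_sub_eq_aux h (by abel)
  have hfx1 : ∀ x : G, f x 1 = f 1 1 := fun x => by
    have h := hcoc x 1 1
    rw [mul_one, mul_one] at h
    exact (eq_of_sub_eq_aux h (by abel)).symm
  have hf'x1 : ∀ x : G, f' x 1 = f' 1 1 := fun x => by
    have h := hcoc' x 1 1
    rw [mul_one, mul_one] at h
    exact (eq_of_sub_eq_aux h (by abel)).symm
  set c : M := f 1 1 - f' 1 1 with hc_def
  set d : G → G → M := fun x y => f x y - f' x y - c with hd_def
  have hd1 : ∀ y : G, d 1 y = 0 := fun y => by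
    simp only [hd_def, hc_def, hf1 y, hf'1 y]; abel
  have hd1' : ∀ x : G, d x 1 = 0 := fun x => by
    simp only [hd_def, hc_def, hfx1 x, hf'x1 x]; abel
  have hds : ∀ x y : G, d x y = d y x := fun x y => by
    have h0 : (f x y - f y x) - (f' x y - f' y x) = 0 := sub_eq_zero.mpr (hanti x y)
    refine eq_of_sub_eq_aux h0 ?_
    simp only [hd_def]; abel
  have hdc : ∀ x y z : G, d y z - d (x * y) z + d x (y * z) - d x y = 0 := fun x y z => by
    have h1 := hcoc x y z
    have h2 := hcoc' x y z
    have he : (f y z - f (x * y) z + f x (y * z) - f x y)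
        - (f' y z - f' (x * y) z + f' x (y * z) - f' x y) = 0 := by
      rw [h1, h2, sub_zero]
    refine (eq_of_sub_eq_aux he ?_)
    simp only [hd_def]; abel
  -- lift coefficients to the universe of `max u_1 u_2`
  set M' : Type (max u_1 u_2) := ULift.{u_1} M with hM'_def
  set d' : G → G → M' := fun x y => ULift.up (d x y) with hd'_def
  have hdown : ∀ (a b : M') , (a + b).down = a.down + b.down := fun a b => rfl
  have hdownsub : ∀ (a b : M'), (a - b).down = a.down - b.down := fun a b => rfl
  have hd'1 : ∀ y : G, d' 1 y = 0 := fun y => by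
    apply ULift.ext; show d 1 y = 0; exact hd1 y
  have hd'1' : ∀ x : G, d' x 1 = 0 := fun x => by
    apply ULift.ext; show d x 1 = 0; exact hd1' x
  have hd's : ∀ x y : G, d' x y = d' y x := fun x y => by
    apply ULift.ext; show d x y = d y x; exact hds x y
  have hd'c : ∀ x y z : G, d' y z - d' (x * y) z + d' x (y * z) - d' x y = 0 := fun x y z => by
    apply ULift.ext
    show d y z - d (x * y) z + d x (y * z) - d x y = 0
    exact hdc x y z
  -- divisibility instances
  letI : DivisibleBy M' ℕ :=
    { div := fun m n => if h : 0 < n then ULift.up (hdiv m.down n h).choose else 0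
      div_zero := fun m => by simp
      div_cancel := fun {n} m hn => by
        show n • (if h : 0 < n then ULift.up (hdiv m.down n h).choose else 0) = m
        rw [dif_pos (Nat.pos_of_ne_zero hn)]
        apply ULift.ext
        show n • (hdiv m.down n (Nat.pos_of_ne_zero hn)).choose = m.down
        exact (hdiv m.down n (Nat.pos_of_ne_zero hn)).choose_spec }
  letI : DivisibleBy M' ℤ := AddGroup.divisibleByIntOfDivisibleByNat M'
  -- the extension
  letI instE : AddCommGroup (M' × G) := extAddCommGroup d' hd'c hd's hd'1 hd'1'
  have hadd : ∀ p q : M' × G, p + q = (p.1 + q.1 + d' p.2 q.2, p.2 * q.2) := fun p q => rfl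
  let ιhom : M' →+ (M' × G) :=
    AddMonoidHom.mk' (fun m => ((m, 1) : M' × G)) (fun m n => by
      rw [hadd]
      simp only [hd'1]
      rw [add_zero, mul_one])
  let ι : AddCommGrpCat.of M' ⟶ AddCommGrpCat.of (M' × G) := AddCommGrpCat.ofHom ιhom
  haveI : Mono ι := (AddCommGrpCat.mono_iff_injective _).mpr
    (fun a b h => congrArg Prod.fst (h : ((a, 1) : M' × G) = (b, 1)))
  haveI : Injective (AddCommGrpCat.of M') := AddCommGrpCat.injective_of_divisible M'
  let r : AddCommGrpCat.of (M' × G) ⟶ AddCommGrpCat.of M' :=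
    Injective.factorThru (𝟙 (AddCommGrpCat.of M')) ι
  have hr : ι ≫ r = 𝟙 _ := Injective.comp_factorThru _ _
  let rhom : (M' × G) →+ M' := r.hom
  have hrm : ∀ m : M', rhom ((m, 1) : M' × G) = m := fun m => by
    have := ConcreteCategory.congr_hom hr m
    simp at this; exact this
  -- the splitting function
  refine ⟨fun x => (rhom (((0 : M'), x) : M' × G)).down + c, fun x y => ?_⟩
  show f x y - f' x y = ((rhom ((0:M'), x)).down + c) + ((rhom ((0:M'), y)).down + c)
      - ((rhom ((0:M'), x * y)).down + c)
  have key : (((0 : M'), x) : M' × G) + ((0 : M'), y)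
      = ((d' x y, (1 : G)) : M' × G) + ((0 : M'), x * y) := by
    rw [hadd, hadd]
    simp only [hd'1]
    simp
  have hradd := map_add rhom (((0 : M'), x) : M' × G) (((0 : M'), y) : M' × G)
  rw [key, map_add, hrm] at hradd
  have hdownr : (rhom ((0:M'), x)).down + (rhom ((0:M'), y)).down
      = d x y + (rhom ((0:M'), x * y)).down := by
    have := congrArg ULift.down hradd
    rw [hdown, hdown] at this
    exact this.symm
  have hfin : f x y - f' x y = d x y + c := by simp only [hd_def]; abel
  rw [hfin]
  rw [show (rhom ((0:M'), x)).down + c + ((rhom ((0:M'), y)).down + c)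
      - ((rhom ((0:M'), x * y)).down + c) =
      ((rhom ((0:M'), x)).down + (rhom ((0:M'), y)).down - (rhom ((0:M'), x * y)).down) + c
      from by abel, hdownr]
  abel
end
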